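/- Define on [2√2, 4] the functions a(z) = √((−z⁴ + 16z²)/(8(z² + 2))), g(z) = 4·arccos(z/4) − (z/2)·√(4 − z²/4), h(z) = z²·arcsin(a(z)/z) − 4·arcsin(a(z)/2) + 2·arccos(a(z)), and f(z) = 2(g(z) + h(z)). Then f is strictly increasing on (2√2, 4) and f(4) = 2π. -/

import Mathlib

noncomputable def aFun (z : ℝ) : ℝ :=
  Real.sqrt ((-z ^ 4 + 16 * z ^ 2) / (8 * (z ^ 2 + 2)))

noncomputable def gFun (z : ℝ) : ℝ :=
  4 * Real.arccos (z / 4) - (z / 2) * Real.sqrt (4 - z ^ 2 / 4)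

noncomputable def hFun (z : ℝ) : ℝ :=
  z ^ 2 * Real.arcsin (aFun z / z) - 4 * Real.arcsin (aFun z / 2) +
    2 * Real.arccos (aFun z)

noncomputable def fFun (z : ℝ) : ℝ := 2 * (gFun z + hFun z)

open Real

set_option maxHeartbeats 2000000 in
lemma keyDeriv (z : ℝ) (h1 : 2 * Real.sqrt 2 < z) (h2 : z < 4) :
    HasDerivAt fFun (4 * z * Real.arcsin (aFun z / z) - Real.sqrt (16 - z ^ 2)) z := by
  have hz0 : (0:ℝ) < z := lt_trans (by positivity) h1
  have hz8 : 8 < z ^ 2 := by nlinarith [Real.sq_sqrt (by norm_num : (0:ℝ) ≤ 2), Real.sqrt_nonneg 2]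
  have hz16 : z ^ 2 < 16 := by nlinarith
  set q := Real.sqrt (16 - z ^ 2) with hqdef
  set r := Real.sqrt (8 * (z ^ 2 + 2)) with hrdef
  have hq2 : q ^ 2 = 16 - z ^ 2 := Real.sq_sqrt (by nlinarith)
  have hr2 : r ^ 2 = 8 * z ^ 2 + 16 := by
    rw [hrdef, Real.sq_sqrt (by nlinarith)]; ring
  have hqpos : 0 < q := Real.sqrt_pos.2 (by nlinarith)
  have hrpos : 0 < r := Real.sqrt_pos.2 (by nlinarith)
  have hq3 : q ^ 3 = (16 - z ^ 2) * q := by rw [pow_succ, hq2]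
  have hr3 : r ^ 3 = (8 * z ^ 2 + 16) * r := by rw [pow_succ, hr2]
  have hr4 : r ^ 4 = (8 * z ^ 2 + 16) ^ 2 := by rw [show r ^ 4 = (r ^ 2) ^ 2 by ring, hr2]
  have hq4 : q ^ 4 = (16 - z ^ 2) ^ 2 := by rw [show q ^ 4 = (q ^ 2) ^ 2 by ring, hq2]
  have hr5 : r ^ 5 = (8 * z ^ 2 + 16) ^ 2 * r := by rw [pow_succ, hr4]
  have hr6 : r ^ 6 = (8 * z ^ 2 + 16) ^ 3 := by rw [show r ^ 6 = (r ^ 2) ^ 3 by ring, hr2]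
  have hq5 : q ^ 5 = (16 - z ^ 2) ^ 2 * q := by rw [pow_succ, hq4]
  have hq6 : q ^ 6 = (16 - z ^ 2) ^ 3 := by rw [show q ^ 6 = (q ^ 2) ^ 3 by ring, hq2]
  have hr7 : r ^ 7 = (8 * z ^ 2 + 16) ^ 3 * r := by rw [pow_succ, hr6]
  have hq7 : q ^ 7 = (16 - z ^ 2) ^ 3 * q := by rw [pow_succ, hq6]
  have hr8 : r ^ 8 = (8 * z ^ 2 + 16) ^ 4 := by rw [show r ^ 8 = (r ^ 2) ^ 4 by ring, hr2]
  have hq8 : q ^ 8 = (16 - z ^ 2) ^ 4 := by rw [show q ^ 8 = (q ^ 2) ^ 4 by ring, hq2]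
  have hr9 : r ^ 9 = (8 * z ^ 2 + 16) ^ 4 * r := by rw [pow_succ, hr8]
  have hq9 : q ^ 9 = (16 - z ^ 2) ^ 4 * q := by rw [pow_succ, hq8]
  have hr10 : r ^ 10 = (8 * z ^ 2 + 16) ^ 5 := by rw [show r ^ 10 = (r ^ 2) ^ 5 by ring, hr2]
  have hq10 : q ^ 10 = (16 - z ^ 2) ^ 5 := by rw [show q ^ 10 = (q ^ 2) ^ 5 by ring, hq2]
  have hr11 : r ^ 11 = (8 * z ^ 2 + 16) ^ 5 * r := by rw [pow_succ, hr10]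
  have hq11 : q ^ 11 = (16 - z ^ 2) ^ 5 * q := by rw [pow_succ, hq10]
  have hr12 : r ^ 12 = (8 * z ^ 2 + 16) ^ 6 := by rw [show r ^ 12 = (r ^ 2) ^ 6 by ring, hr2]
  have hq12 : q ^ 12 = (16 - z ^ 2) ^ 6 := by rw [show q ^ 12 = (q ^ 2) ^ 6 by ring, hq2]
  have hd1 : (8:ℝ) * (z ^ 2 + 2) ≠ 0 := by positivity
  have ha : aFun z = z * q / r := by
    rw [aFun, show (-z ^ 4 + 16 * z ^ 2) / (8 * (z ^ 2 + 2)) = (z * q / r) ^ 2 by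
      rw [div_pow, mul_pow, hq2, hr2]
      field_simp
      ring]
    exact Real.sqrt_sq (by positivity)
  -- derivative of aFun
  have huz : (-z ^ 4 + 16 * z ^ 2) / (8 * (z ^ 2 + 2)) ≠ 0 := by
    refine div_ne_zero ?_ hd1
    have hpp : (0:ℝ) < -z ^ 4 + 16 * z ^ 2 := by nlinarith only [hz8, hz16]
    exact hpp.ne'
  have hnum : HasDerivAt (fun x : ℝ => -x ^ 4 + 16 * x ^ 2) (-(4 * z ^ 3) + 16 * (2 * z)) z := by
    have := (hasDerivAt_pow 4 z).neg.add ((hasDerivAt_pow 2 z).const_mul 16)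
    exact this.congr_deriv (by push_cast; ring)
  have hden : HasDerivAt (fun x : ℝ => 8 * (x ^ 2 + 2)) (8 * (2 * z)) z := by
    have := ((hasDerivAt_pow 2 z).add_const 2).const_mul 8
    exact this.congr_deriv (by push_cast; ring)
  set A : ℝ := -8 * (z ^ 2 + 8) * (z ^ 2 - 4) / (q * r ^ 3) with hAdef
  have hA : HasDerivAt aFun A z := by
    have h := ((hnum.div hden hd1).sqrt huz)
    convert h using 1
    · rfl
    change A = _ / (2 * Real.sqrt ((-z ^ 4 + 16 * z ^ 2) / (8 * (z ^ 2 + 2))))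
    rw [show Real.sqrt ((-z ^ 4 + 16 * z ^ 2) / (8 * (z ^ 2 + 2))) = z * q / r from ha, hAdef]
    rw [show (8:ℝ) * (z ^ 2 + 2) = r ^ 2 by rw [hr2]; ring]
    field_simp
    ring_nf
    simp only [hq12, hq11, hq10, hq9, hq8, hq7, hq6, hq5, hq4, hq3, hq2, hr12, hr11, hr10, hr9, hr8, hr7, hr6, hr5, hr4, hr3, hr2]
    ring
  -- sqrt value lemmas
  have s1 : Real.sqrt (1 - (aFun z / z) ^ 2) = 3 * z / r := by
    rw [ha, show 1 - (z * q / r / z) ^ 2 = (3 * z / r) ^ 2 by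
      field_simp
      ring_nf
      simp only [hq12, hq11, hq10, hq9, hq8, hq7, hq6, hq5, hq4, hq3, hq2, hr12, hr11, hr10, hr9, hr8, hr7, hr6, hr5, hr4, hr3, hr2]
      ring]
    exact Real.sqrt_sq (by positivity)
  have s2 : Real.sqrt (1 - (aFun z / 2) ^ 2) = (z ^ 2 + 8) / (2 * r) := by
    rw [ha, show 1 - (z * q / r / 2) ^ 2 = ((z ^ 2 + 8) / (2 * r)) ^ 2 by
      field_simp
      ring_nf
      simp only [hq12, hq11, hq10, hq9, hq8, hq7, hq6, hq5, hq4, hq3, hq2, hr12, hr11, hr10, hr9, hr8, hr7, hr6, hr5, hr4, hr3, hr2]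
      ring]
    exact Real.sqrt_sq (by positivity)
  have s3 : Real.sqrt (1 - aFun z ^ 2) = (z ^ 2 - 4) / r := by
    rw [ha, show 1 - (z * q / r) ^ 2 = ((z ^ 2 - 4) / r) ^ 2 by
      field_simp
      ring_nf
      simp only [hq12, hq11, hq10, hq9, hq8, hq7, hq6, hq5, hq4, hq3, hq2, hr12, hr11, hr10, hr9, hr8, hr7, hr6, hr5, hr4, hr3, hr2]
      ring]
    exact Real.sqrt_sq (div_nonneg (by linarith only [hz8]) hrpos.le)
  -- side conditions for arcsin/arccos
  have hqr : q < r := by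
    rw [hqdef, hrdef]; exact Real.sqrt_lt_sqrt (by linarith only [hz16]) (by linarith only [hz8])
  have haz : aFun z / z = q / r := by rw [ha]; field_simp
  have hqr0 : 0 < q / r := div_pos hqpos hrpos
  have hne1 : aFun z / z ≠ -1 := by rw [haz]; exact ne_of_gt (by linarith only [hqr0])
  have hne2 : aFun z / z ≠ 1 := by
    rw [haz]; exact ne_of_lt ((div_lt_one hrpos).2 hqr)
  have hane : aFun z < 1 := by
    rw [ha, div_lt_one hrpos]
    have h' : (z * q) ^ 2 < r ^ 2 := by rw [mul_pow, hq2, hr2]; nlinarith only [hz8, hz16]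
    exact lt_of_pow_lt_pow_left₀ 2 hrpos.le h'
  have hapos : 0 < aFun z := by rw [ha]; exact div_pos (mul_pos hz0 hqpos) hrpos
  have hne3 : aFun z / 2 ≠ -1 := by
    have hp2 := div_pos hapos (by norm_num : (0:ℝ) < 2); exact ne_of_gt (by linarith only [hp2])
  have hne4 : aFun z / 2 ≠ 1 := by
    have h' : (z * q) ^ 2 < (2 * r) ^ 2 := by
      rw [mul_pow, mul_pow, hq2, hr2]; nlinarith only [hz8, hz16]
    have := lt_of_pow_lt_pow_left₀ 2 (by positivity : (0:ℝ) ≤ 2 * r) h'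
    rw [ha]
    refine ne_of_lt ?_
    rw [div_div, div_lt_one (by positivity)]
    linarith only [this]
  have hne5 : aFun z ≠ -1 := ne_of_gt (by linarith only [hapos])
  have hne6 : aFun z ≠ 1 := ne_of_lt hane
  -- derivative of gFun
  have s4 : Real.sqrt (1 - (z / 4) ^ 2) = q / 4 := by
    rw [show 1 - (z / 4) ^ 2 = (q / 4) ^ 2 by rw [div_pow, div_pow, hq2]; ring]
    exact Real.sqrt_sq (by positivity)
  have s5 : Real.sqrt (4 - z ^ 2 / 4) = q / 2 := by
    rw [show 4 - z ^ 2 / 4 = (q / 2) ^ 2 by rw [div_pow, hq2]; ring]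
    exact Real.sqrt_sq (by positivity)
  have hg1 : HasDerivAt (fun x : ℝ => Real.arccos (x / 4))
      (-(1 / Real.sqrt (1 - (z / 4) ^ 2)) * (1 / 4)) z := by
    have hz4 : (0:ℝ) < z / 4 := by positivity
    exact (Real.hasDerivAt_arccos (ne_of_gt (by linarith only [hz4])) (by
        refine ne_of_lt ?_; rw [div_lt_one (by norm_num : (0:ℝ) < 4)]; exact h2)).comp z
      ((hasDerivAt_id z).div_const 4)
  have hg2 : HasDerivAt (fun x : ℝ => 4 - x ^ 2 / 4) (-(2 * z / 4)) z := by
    have := ((hasDerivAt_pow 2 z).div_const 4).const_sub 4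
    exact this.congr_deriv (by push_cast; ring)
  have hg3 : HasDerivAt (fun x : ℝ => Real.sqrt (4 - x ^ 2 / 4))
      ((-(2 * z / 4)) / (2 * Real.sqrt (4 - z ^ 2 / 4))) z :=
    hg2.sqrt (by linarith only [hz16] : (0:ℝ) < 4 - z ^ 2 / 4).ne'
  have hg : HasDerivAt gFun (-(q / 2)) z := by
    have h := ((hg1.const_mul 4).sub (((hasDerivAt_id z).div_const 2).mul hg3))
    have h' : HasDerivAt gFun
        (4 * (-(1 / Real.sqrt (1 - (z / 4) ^ 2)) * (1 / 4)) -
          (1 / 2 * Real.sqrt (4 - z ^ 2 / 4) +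
            z / 2 * ((-(2 * z / 4)) / (2 * Real.sqrt (4 - z ^ 2 / 4))))) z := h
    rw [s4, s5] at h'
    convert h' using 1
    field_simp
    ring_nf
    simp only [hq12, hq11, hq10, hq9, hq8, hq7, hq6, hq5, hq4, hq3, hq2, hr12, hr11, hr10, hr9, hr8, hr7, hr6, hr5, hr4, hr3, hr2]
    ring
  -- derivative of hFun
  have hc1 : HasDerivAt (fun x : ℝ => aFun x / x) ((A * z - aFun z * 1) / z ^ 2) z :=
    hA.div (hasDerivAt_id z) hz0.ne'
  have harc1 : HasDerivAt (fun x : ℝ => Real.arcsin (aFun x / x))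
      (1 / Real.sqrt (1 - (aFun z / z) ^ 2) * ((A * z - aFun z * 1) / z ^ 2)) z :=
    HasDerivAt.comp (h := fun x : ℝ => aFun x / x) (h₂ := Real.arcsin) z
      (Real.hasDerivAt_arcsin hne1 hne2) hc1
  have harc2 : HasDerivAt (fun x : ℝ => Real.arcsin (aFun x / 2))
      (1 / Real.sqrt (1 - (aFun z / 2) ^ 2) * (A / 2)) z :=
    HasDerivAt.comp (h := fun x : ℝ => aFun x / 2) (h₂ := Real.arcsin) z
      (Real.hasDerivAt_arcsin hne3 hne4) (hA.div_const 2)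
  have harc3 : HasDerivAt (fun x : ℝ => Real.arccos (aFun x))
      (-(1 / Real.sqrt (1 - aFun z ^ 2)) * A) z :=
    HasDerivAt.comp (h := aFun) (h₂ := Real.arccos) z
      (Real.hasDerivAt_arccos hne5 hne6) hA
  have hh : HasDerivAt hFun (2 * z * Real.arcsin (aFun z / z)) z := by
    have h := (((hasDerivAt_pow 2 z).mul harc1).sub (harc2.const_mul 4)).add (harc3.const_mul 2)
    have h' : HasDerivAt hFun
        (((2:ℕ) : ℝ) * z ^ 1 * Real.arcsin (aFun z / z) +
            z ^ 2 * (1 / Real.sqrt (1 - (aFun z / z) ^ 2) * ((A * z - aFun z * 1) / z ^ 2)) -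
          4 * (1 / Real.sqrt (1 - (aFun z / 2) ^ 2) * (A / 2)) +
          2 * (-(1 / Real.sqrt (1 - aFun z ^ 2)) * A)) z := h
    rw [s1, s2, s3, ha, hAdef] at h'
    rw [show z * q / r / z = q / r by field_simp] at h'
    convert h' using 1
    rw [haz]
    have hne7 : z ^ 2 + 8 ≠ 0 := by positivity
    have hne8 : z ^ 2 - 4 ≠ 0 := ne_of_gt (by linarith only [hz8])
    push_cast
    field_simp [hqpos.ne', hrpos.ne', hz0.ne', hne7, hne8]
    ring_nf
    simp only [hq12, hq11, hq10, hq9, hq8, hq7, hq6, hq5, hq4, hq3, hq2, hr12, hr11, hr10, hr9, hr8, hr7, hr6, hr5, hr4, hr3, hr2]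
    ring
  have hf : HasDerivAt fFun (2 * (-(q / 2) + 2 * z * Real.arcsin (aFun z / z))) z :=
    (hg.add hh).const_mul 2
  convert hf using 1
  ring

set_option maxHeartbeats 800000 in
lemma keyPos (z : ℝ) (h1 : 2 * Real.sqrt 2 < z) (h2 : z < 4) :
    0 < 4 * z * Real.arcsin (aFun z / z) - Real.sqrt (16 - z ^ 2) := by
  have hz0 : (0:ℝ) < z := lt_trans (by positivity) h1
  have hz8 : 8 < z ^ 2 := by nlinarith [Real.sq_sqrt (by norm_num : (0:ℝ) ≤ 2), Real.sqrt_nonneg 2]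
  have hz16 : z ^ 2 < 16 := by nlinarith
  set q := Real.sqrt (16 - z ^ 2) with hqdef
  set r := Real.sqrt (8 * (z ^ 2 + 2)) with hrdef
  have hq2 : q ^ 2 = 16 - z ^ 2 := Real.sq_sqrt (by nlinarith)
  have hr2 : r ^ 2 = 8 * z ^ 2 + 16 := by
    rw [hrdef, Real.sq_sqrt (by nlinarith)]; ring
  have hqpos : 0 < q := Real.sqrt_pos.2 (by nlinarith)
  have hrpos : 0 < r := Real.sqrt_pos.2 (by nlinarith)
  have ha : aFun z = z * q / r := by
    rw [aFun, show (-z ^ 4 + 16 * z ^ 2) / (8 * (z ^ 2 + 2)) = (z * q / r) ^ 2 by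
      rw [div_pow, mul_pow, hq2, hr2]
      field_simp
      ring]
    exact Real.sqrt_sq (by positivity)
  have haz : aFun z / z = q / r := by rw [ha]; field_simp
  have hqr : q < r := by
    rw [hqdef, hrdef]; exact Real.sqrt_lt_sqrt (by linarith only [hz16]) (by linarith only [hz8])
  have hqr0 : 0 < q / r := div_pos hqpos hrpos
  have hqr1 : q / r ≤ 1 := le_of_lt ((div_lt_one hrpos).2 hqr)
  have harcsin : q / r < Real.arcsin (q / r) := by
    have hp : 0 < Real.arcsin (q / r) := Real.arcsin_pos.2 hqr0
    have := Real.sin_lt hp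
    rwa [Real.sin_arcsin (by linarith only [hqr0]) hqr1] at this
  have h4z : r < 4 * z := by
    have h' : r ^ 2 < (4 * z) ^ 2 := by rw [hr2]; nlinarith only [hz8]
    exact lt_of_pow_lt_pow_left₀ 2 (by positivity) h'
  have e1 : q < 4 * z * (q / r) := by
    rw [mul_div_assoc'] at *
    rw [lt_div_iff₀ hrpos]
    nlinarith only [h4z, hqpos]
  have e2 : 4 * z * (q / r) < 4 * z * Real.arcsin (q / r) :=
    mul_lt_mul_of_pos_left harcsin (by positivity)
  rw [haz]
  linarith only [e1, e2]

theorem stmt13 :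
    StrictMonoOn fFun (Set.Ioo (2 * Real.sqrt 2) 4) ∧ fFun 4 = 2 * Real.pi := by
  constructor
  · apply strictMonoOn_of_deriv_pos (convex_Ioo _ _)
    · intro x hx
      exact ((keyDeriv x hx.1 hx.2).continuousAt).continuousWithinAt
    · intro x hx
      rw [interior_Ioo] at hx
      rw [(keyDeriv x hx.1 hx.2).deriv]
      exact keyPos x hx.1 hx.2
  · have ha4 : aFun 4 = 0 := by
      rw [aFun]; norm_num
    rw [fFun, gFun, hFun, ha4]
    norm_num [Real.arccos_one, Real.arcsin_zero, Real.arccos_zero]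
    ring
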